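/- arXiv:math/0605587 — 3 statements merged into one kernel-verified Lean document; each statement's English description precedes it below -/
import Mathlib

section
/- Let G be a compact Lie group with Lie algebra 𝔤 and G_X = {g | Ad(g)X = X}. If (V, c, V̄, c̄, X) satisfies: all entries of V and of c V̄ c^{-1} lie in G_X, 𝔪(V) = exp(X/2)·c·c̄, and 𝔪(V̄) = c̄·exp(-X/2)·c, then 𝔪(V)·𝔪(c·𝔯(V̄)·c^{-1}) = exp(X). In particular (V, c·𝔯(V̄)·c^{-1}, X) lies in the Yang–Mills representation variety X^{2ℓ,0}_{YM}(G) = {(V₁,V₂,X) ∈ (G_X)^{2ℓ} × (G_X)^{2ℓ} × 𝔤 | 𝔪(V₁)·𝔪(V₂) = exp(X)}. -/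
/-- Abstraction of a Lie group `G` with Lie algebra `𝔤`, exponential map `exp`,
and adjoint representation `Ad`, satisfying the standard identities
`exp (Ad g X) = g * exp X * g⁻¹` and one-parameter subgroup additivity. -/
structure LieExpAd (G 𝔤 : Type*) [Group G] [TopologicalSpace G]
    [AddCommGroup 𝔤] [Module ℝ 𝔤] where
  exp : 𝔤 → G
  Ad : G →* (𝔤 ≃ₗ[ℝ] 𝔤)
  exp_Ad : ∀ (g : G) (X : 𝔤), exp (Ad g X) = g * exp X * g⁻¹
  exp_add_smul : ∀ (r s : ℝ) (X : 𝔤), exp ((r + s) • X) = exp (r • X) * exp (s • X)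

variable {G 𝔤 : Type*} [Group G] [TopologicalSpace G] [IsTopologicalGroup G]
  [AddCommGroup 𝔤] [Module ℝ 𝔤]

open scoped commutatorElement

/-- `𝔪(a₁,b₁,…,a_ℓ,b_ℓ) = ∏ᵢ [aᵢ,bᵢ]` (ordered product of commutators). -/
def mm {ℓ : ℕ} (V : Fin ℓ → G × G) : G :=
  (List.ofFn fun i => ⁅(V i).1, (V i).2⁆).prod

/-- `𝔯(a₁,b₁,…,a_ℓ,b_ℓ) = (b_ℓ,a_ℓ,…,b₁,a₁)`. -/
def rr {ℓ : ℕ} (V : Fin ℓ → G × G) : Fin ℓ → G × G :=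
  fun i => ((V i.rev).2, (V i.rev).1)

/-- Entrywise conjugation `g V g⁻¹` of a tuple. -/
def conjT {ℓ : ℕ} (g : G) (V : Fin ℓ → G × G) : Fin ℓ → G × G :=
  fun i => (g * (V i).1 * g⁻¹, g * (V i).2 * g⁻¹)

/-- The adjoint stabilizer `G_X = {g | Ad(g)X = X}`. -/
def stab (L : LieExpAd G 𝔤) (X : 𝔤) : Set G := {g | L.Ad g X = X}

/-- All entries of the tuple `V` lie in `G_X`. -/
def tupleStab (L : LieExpAd G 𝔤) (X : 𝔤) {ℓ : ℕ} (V : Fin ℓ → G × G) : Prop :=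
  ∀ i, (V i).1 ∈ stab L X ∧ (V i).2 ∈ stab L X

/-- Membership in the symmetric representation variety `Z^{ℓ,1}_{YM}(G)`. -/
def memZ1 (L : LieExpAd G 𝔤) {ℓ : ℕ} (V : Fin ℓ → G × G) (c : G)
    (Vb : Fin ℓ → G × G) (cb : G) (X : 𝔤) : Prop :=
  tupleStab L X V ∧ tupleStab L X (conjT c Vb) ∧
  mm V = L.exp ((1/2 : ℝ) • X) * (c * cb) ∧
  mm Vb = cb * L.exp (-((1/2 : ℝ) • X)) * c

/-- Membership in the symmetric representation variety `Z^{ℓ,2}_{YM}(G)`. -/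
def memZ2 (L : LieExpAd G 𝔤) {ℓ : ℕ} (V : Fin ℓ → G × G) (d c : G)
    (Vb : Fin ℓ → G × G) (db cb : G) (X : 𝔤) : Prop :=
  tupleStab L X V ∧ tupleStab L X (conjT (d⁻¹ * c) Vb) ∧
  d⁻¹ ∈ stab L X ∧ c * cb ∈ stab L X ∧
  mm V = L.exp ((1/2 : ℝ) • X) * (c * db * c⁻¹ * d) ∧
  mm Vb = cb * d * L.exp (-((1/2 : ℝ) • X)) * cb⁻¹ * db



lemma ofFn_rev' {α : Type*} {n : ℕ} (f : Fin n → α) :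
    List.ofFn (fun i => f i.rev) = (List.ofFn f).reverse := by
  apply List.ext_getElem
  · simp
  · intro i h1 h2
    simp only [List.getElem_ofFn, List.getElem_reverse, List.length_ofFn]
    congr 1
    ext
    simp [Fin.rev]
    omega

lemma ad_mul (L : LieExpAd G 𝔤) (a b : G) (Y : 𝔤) :
    L.Ad (a * b) Y = L.Ad a (L.Ad b Y) := by rw [map_mul]; rfl

lemma ad_inv (L : LieExpAd G 𝔤) (a : G) (Y : 𝔤) (h : L.Ad a Y = Y) :
    L.Ad a⁻¹ Y = Y := by
  conv_lhs => rw [← h, ← ad_mul, inv_mul_cancel, map_one]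
  rfl

lemma mm_conjT {ℓ : ℕ} (g : G) (W : Fin ℓ → G × G) :
    mm (conjT g W) = g * mm W * g⁻¹ := by
  have h : (List.ofFn fun i => ⁅(conjT g W i).1, (conjT g W i).2⁆)
      = (List.ofFn fun i => ⁅(W i).1, (W i).2⁆).map
        ((MulAut.conj g).toMonoidHom) := by
    rw [List.map_ofFn]
    refine congrArg _ (funext fun i => ?_)
    simp [conjT, commutatorElement_def, MulAut.conj_apply]
    group
  rw [mm, h, ← map_list_prod]
  simp [mm, MulAut.conj_apply]

lemma mm_rr {ℓ : ℕ} (W : Fin ℓ → G × G) : mm (rr W) = (mm W)⁻¹ := by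
  have h : (List.ofFn fun i => ⁅(rr W i).1, (rr W i).2⁆)
      = ((List.ofFn fun i => ⁅(W i).1, (W i).2⁆).map (fun x => x⁻¹)).reverse := by
    rw [← List.map_reverse, ← ofFn_rev', List.map_ofFn]
    refine congrArg _ (funext fun i => ?_)
    simp [rr, commutatorElement_inv]
  rw [mm, h, ← List.prod_inv_reverse, mm]

lemma ad_mm {ℓ : ℕ} (L : LieExpAd G 𝔤) (X : 𝔤) (W : Fin ℓ → G × G)
    (hW : tupleStab L X W) : L.Ad (mm W) X = X := by
  have key : ∀ l : List G, (∀ g ∈ l, L.Ad g X = X) → L.Ad l.prod X = X := by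
    intro l
    induction l with
    | nil => intro _; simp
    | cons a t ih =>
      intro h
      rw [List.prod_cons, ad_mul, ih (fun g hg => h g (List.mem_cons_of_mem a hg)),
        h a (List.mem_cons_self (a := a) (l := t))]
  refine key _ fun g hg => ?_
  rw [List.mem_ofFn] at hg
  obtain ⟨i, rfl⟩ := hg
  obtain ⟨ha, hb⟩ := hW i
  show L.Ad ⁅(W i).1, (W i).2⁆ X = X
  rw [commutatorElement_def, ad_mul, ad_mul, ad_mul,
    ad_inv L _ _ hb, ad_inv L _ _ ha, hb, ha]

/-- `Φ` maps `Z^{ℓ,1}_{YM}(G)` into `X^{2ℓ,0}_{YM}(G)`: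
`𝔪(V)·𝔪(c 𝔯(V̄) c⁻¹) = exp X`, and `(V, c 𝔯(V̄) c⁻¹, X)` has entries in `G_X`. -/
theorem phi_into_ym [CompactSpace G] (L : LieExpAd G 𝔤) {ℓ : ℕ}
    (V Vb : Fin ℓ → G × G) (c cb : G) (X : 𝔤)
    (hV : tupleStab L X V) (hVb : tupleStab L X (conjT c Vb))
    (h1 : mm V = L.exp ((1/2 : ℝ) • X) * (c * cb))
    (h2 : mm Vb = cb * L.exp (-((1/2 : ℝ) • X)) * c) :
    mm V * mm (conjT c (rr Vb)) = L.exp X ∧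
    tupleStab L X V ∧ tupleStab L X (conjT c (rr Vb)) := by
  have key : ∀ r s : ℝ, L.exp ((r + s) • X) = L.exp (r • X) * L.exp (s • X) :=
    fun r s => L.exp_add_smul r s X
  have h0 : L.exp ((0:ℝ) • X) = 1 := by
    have h := key 0 0
    rw [add_zero] at h
    exact left_eq_mul.mp h
  have hEinv : L.exp (-((1/2 : ℝ) • X)) = (L.exp ((1/2 : ℝ) • X))⁻¹ := by
    have h := key (1/2) (-(1/2))
    rw [add_neg_cancel, h0, neg_smul] at h
    exact eq_inv_of_mul_eq_one_right h.symm
  have hEE : L.exp ((1/2 : ℝ) • X) * L.exp ((1/2 : ℝ) • X) = L.exp X := by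
    have h := key (1/2) (1/2)
    rw [show ((1:ℝ)/2 + 1/2 : ℝ) = 1 by norm_num, one_smul] at h
    exact h.symm
  have hAdm : L.Ad (mm V) X = X := ad_mm L X V hV
  have hgE : (c * cb) * L.exp ((1/2 : ℝ) • X) * (c * cb)⁻¹ = L.exp ((1/2 : ℝ) • X) := by
    have h' : L.Ad (L.exp ((1/2 : ℝ) • X)) (L.Ad (c * cb) X) = X := by
      rw [← ad_mul, ← h1, hAdm]
    have hg : L.Ad (c * cb) X = L.Ad (L.exp ((1/2 : ℝ) • X))⁻¹ X := by
      have h'' := congrArg (L.Ad (L.exp ((1/2 : ℝ) • X))⁻¹) h'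
      rw [← ad_mul, inv_mul_cancel, map_one] at h''
      exact h''
    have hadg : L.Ad (c * cb) ((1/2 : ℝ) • X)
        = L.Ad (L.exp ((1/2 : ℝ) • X))⁻¹ ((1/2 : ℝ) • X) := by
      rw [map_smul, map_smul, hg]
    have e1 := L.exp_Ad (c * cb) ((1/2 : ℝ) • X)
    have e2 := L.exp_Ad (L.exp ((1/2 : ℝ) • X))⁻¹ ((1/2 : ℝ) • X)
    rw [hadg, e2] at e1
    rw [← e1]
    group
  constructor
  · rw [mm_conjT, mm_rr, h1, h2, hEinv]
    calc L.exp ((1/2 : ℝ) • X) * (c * cb) *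
          (c * (cb * (L.exp ((1/2 : ℝ) • X))⁻¹ * c)⁻¹ * c⁻¹)
        = L.exp ((1/2 : ℝ) • X) *
          ((c * cb) * L.exp ((1/2 : ℝ) • X) * (c * cb)⁻¹) := by group
      _ = L.exp ((1/2 : ℝ) • X) * L.exp ((1/2 : ℝ) • X) := by rw [hgE]
      _ = L.exp X := hEE
  exact ⟨hV, fun i => ⟨(hVb i.rev).2, (hVb i.rev).1⟩⟩
end

section
/- Let G be a compact Lie group with Lie algebra 𝔤. Define τ(V, c, V̄, c̄, X) = (V̄, c̄, V, c, -Ad(c̄)(X)). Then τ maps Z^{ℓ,1}_{YM}(G) into itself. -/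
variable {G 𝔤 : Type*} [Group G] [TopologicalSpace G] [IsTopologicalGroup G]
  [AddCommGroup 𝔤] [Module ℝ 𝔤]

open scoped commutatorElement

set_option linter.unusedSectionVars false

section Aux

variable (L : LieExpAd G 𝔤)

lemma ad_mul_s10 (g h : G) (X : 𝔤) : L.Ad (g * h) X = L.Ad g (L.Ad h X) := by
  rw [map_mul]; rfl

lemma stab_one (X : 𝔤) : (1 : G) ∈ stab L X := by
  show L.Ad 1 X = X; rw [map_one]; rfl

variable {L}

lemma stab_mul {X : 𝔤} {g h : G} (hg : g ∈ stab L X) (hh : h ∈ stab L X) :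
    g * h ∈ stab L X := by
  show L.Ad (g * h) X = X
  rw [ad_mul_s10, hh, hg]

lemma stab_inv {X : 𝔤} {g : G} (hg : g ∈ stab L X) : g⁻¹ ∈ stab L X := by
  show L.Ad g⁻¹ X = X
  conv_lhs => rw [← hg]
  rw [← ad_mul_s10, inv_mul_cancel, map_one]; rfl

lemma stab_commutator {X : 𝔤} {g h : G} (hg : g ∈ stab L X) (hh : h ∈ stab L X) :
    ⁅g, h⁆ ∈ stab L X :=
  stab_mul (stab_mul (stab_mul hg hh) (stab_inv hg)) (stab_inv hh)

lemma stab_list_prod {X : 𝔤} : ∀ l : List G, (∀ x ∈ l, x ∈ stab L X) →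
    l.prod ∈ stab L X
  | [], _ => by simpa using stab_one L X
  | a :: l, h => by
    rw [List.prod_cons]
    exact stab_mul (h a (by simp)) (stab_list_prod l fun x hx => h x (by simp [hx]))

lemma stab_mm {X : 𝔤} {ℓ : ℕ} {V : Fin ℓ → G × G} (hV : tupleStab L X V) :
    mm V ∈ stab L X := by
  apply stab_list_prod
  intro x hx
  rw [List.mem_ofFn] at hx
  obtain ⟨i, rfl⟩ := hx
  exact stab_commutator (hV i).1 (hV i).2

variable (L)

lemma exp_zero_smul (X : 𝔤) : L.exp ((0 : ℝ) • X) = 1 := by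
  have h := L.exp_add_smul 0 0 X
  rw [zero_add] at h
  exact (left_eq_mul.mp h)

lemma exp_half_neg_half (X : 𝔤) :
    L.exp ((1/2 : ℝ) • X) * L.exp (-((1/2 : ℝ) • X)) = 1 := by
  have h := L.exp_add_smul (1/2) (-(1/2)) X
  rw [add_neg_cancel, exp_zero_smul, neg_smul] at h
  exact h.symm

lemma exp_neg_half_half (X : 𝔤) :
    L.exp (-((1/2 : ℝ) • X)) * L.exp ((1/2 : ℝ) • X) = 1 := by
  have h := L.exp_add_smul (-(1/2)) (1/2) X
  rw [neg_add_cancel, exp_zero_smul, neg_smul] at h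
  exact h.symm

variable {L}

/-- Any element of `G_X` commutes with `exp (r • X)`. -/
lemma stab_commute_exp {X : 𝔤} {g : G} (hg : g ∈ stab L X) (Y : 𝔤)
    (hY : ∃ r : ℝ, Y = r • X) : g * L.exp Y = L.exp Y * g := by
  obtain ⟨r, rfl⟩ := hY
  have h1 : L.Ad g (r • X) = r • X := by rw [map_smul, hg]
  have h2 := L.exp_Ad g (r • X)
  rw [h1] at h2
  conv_rhs => rw [h2]
  group

end Aux

/-- `τ(V,c,V̄,c̄,X) = (V̄,c̄,V,c,-Ad(c̄)X)` maps `Z^{ℓ,1}_{YM}(G)`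
into itself. -/
theorem tau_maps_Z1 [CompactSpace G] (L : LieExpAd G 𝔤) {ℓ : ℕ}
    (V Vb : Fin ℓ → G × G) (c cb : G) (X : 𝔤)
    (h : memZ1 L V c Vb cb X) :
    memZ1 L Vb cb V c (-(L.Ad cb X)) := by
  obtain ⟨h1, h2, h3, h4⟩ := h
  set A : G := L.exp (-((1/2 : ℝ) • X)) with hA
  set E : G := L.exp ((1/2 : ℝ) • X) with hE
  have hEA : E * A = 1 := exp_half_neg_half L X
  have hAE : A * E = 1 := exp_neg_half_half L X
  have hM : mm V ∈ stab L X := stab_mm h1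
  have hccb : c * cb = A * mm V := by
    rw [h3, ← mul_assoc, hAE, one_mul]
  have hMA : mm V * A = A * mm V :=
    stab_commute_exp hM _ ⟨-(1/2 : ℝ), by rw [neg_smul]⟩
  -- key lemma for the first component of the goal
  have key : ∀ v : G, c * v * c⁻¹ ∈ stab L X →
      L.Ad v (-(L.Ad cb X)) = -(L.Ad cb X) := by
    intro v hv
    have hs : L.Ad v (L.Ad cb X) = L.Ad cb X := by
      have hcomm : (c * v * c⁻¹) * A = A * (c * v * c⁻¹) :=
        stab_commute_exp hv _ ⟨-(1/2 : ℝ), by rw [neg_smul]⟩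
      have hcb : cb = c⁻¹ * (A * mm V) := by rw [← hccb]; group
      have lhs_eq : v * cb = c⁻¹ * ((c * v * c⁻¹) * A) * mm V := by
        rw [hcb]; group
      calc L.Ad v (L.Ad cb X) = L.Ad (v * cb) X := (ad_mul_s10 L v cb X).symm
        _ = L.Ad (c⁻¹ * (A * (c * v * c⁻¹)) * mm V) X := by
            rw [lhs_eq, hcomm]
        _ = L.Ad c⁻¹ (L.Ad A (L.Ad (c * v * c⁻¹) (L.Ad (mm V) X))) := by
            rw [ad_mul_s10, ad_mul_s10, ad_mul_s10]
        _ = L.Ad c⁻¹ (L.Ad A X) := by rw [hM, hv]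
        _ = L.Ad (c⁻¹ * (A * mm V)) X := by rw [ad_mul_s10, ad_mul_s10, hM]
        _ = L.Ad cb X := by rw [← hcb]
    rw [map_neg, hs]
  refine ⟨?_, ?_, ?_, ?_⟩
  · -- tupleStab of Vb at -(Ad cb X)
    intro i
    exact ⟨key _ (h2 i).1, key _ (h2 i).2⟩
  · -- tupleStab of conjT cb V at -(Ad cb X)
    have key2 : ∀ v : G, v ∈ stab L X →
        cb * v * cb⁻¹ ∈ stab L (-(L.Ad cb X)) := by
      intro v hv
      show L.Ad (cb * v * cb⁻¹) (-(L.Ad cb X)) = -(L.Ad cb X)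
      rw [map_neg]
      have : L.Ad (cb * v * cb⁻¹) (L.Ad cb X) = L.Ad cb X := by
        calc L.Ad (cb * v * cb⁻¹) (L.Ad cb X)
            = L.Ad ((cb * v * cb⁻¹) * cb) X := (ad_mul_s10 L _ cb X).symm
          _ = L.Ad (cb * v) X := by rw [show (cb * v * cb⁻¹) * cb = cb * v by group]
          _ = L.Ad cb (L.Ad v X) := ad_mul_s10 L cb v X
          _ = L.Ad cb X := by rw [hv]
      rw [this]
    intro i
    exact ⟨key2 _ (h1 i).1, key2 _ (h1 i).2⟩
  · -- mm Vb = exp((1/2) • (-(Ad cb X))) * (cb * c)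
    have e1 : (1/2 : ℝ) • (-(L.Ad cb X)) = L.Ad cb (-((1/2 : ℝ) • X)) := by
      rw [map_neg, map_smul, smul_neg]
    rw [e1, L.exp_Ad, h4]
    rw [hA]; group
  · -- mm V = c * exp(-((1/2) • (-(Ad cb X)))) * cb
    have e2 : -((1/2 : ℝ) • (-(L.Ad cb X))) = L.Ad cb ((1/2 : ℝ) • X) := by
      rw [smul_neg, neg_neg, map_smul]
    rw [e2, L.exp_Ad]
    have : c * (cb * E * cb⁻¹) * cb = (c * cb) * E := by group
    rw [this, hccb, ← hMA, mul_assoc, hAE, mul_one]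
end

section
/- Let G be a compact Lie group with Lie algebra 𝔤, and let τ on G^{2ℓ}×G×G^{2ℓ}×G×𝔤 be τ(V,c,V̄,c̄,X) = (V̄,c̄,V,c,-Ad(c̄)X). The map (V, c, X) ↦ (V, c, V, c, 2X) is a bijection from X^{ℓ,1}_{YM}(G) = {(V,c,X) ∈ G^{2ℓ}×G×𝔤 | V ∈ (G_X)^{2ℓ}, Ad(c)(X) = -X, 𝔪(V) = exp(X)·c²} onto the fixed-point set of τ in Z^{ℓ,1}_{YM}(G). -/
variable {G 𝔤 : Type*} [Group G] [TopologicalSpace G] [IsTopologicalGroup G]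
  [AddCommGroup 𝔤] [Module ℝ 𝔤]

open scoped commutatorElement

/-- The set `Z^{ℓ,1}_{YM}(G)`. -/
def Z1set (L : LieExpAd G 𝔤) (ℓ : ℕ) :
    Set ((Fin ℓ → G × G) × G × (Fin ℓ → G × G) × G × 𝔤) :=
  {z | memZ1 L z.1 z.2.1 z.2.2.1 z.2.2.2.1 z.2.2.2.2}

/-- `τ(V,c,V̄,c̄,X) = (V̄,c̄,V,c,-Ad(c̄)X)`. -/
def tau1 (L : LieExpAd G 𝔤) {ℓ : ℕ}
    (z : (Fin ℓ → G × G) × G × (Fin ℓ → G × G) × G × 𝔤) :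
    (Fin ℓ → G × G) × G × (Fin ℓ → G × G) × G × 𝔤 :=
  (z.2.2.1, z.2.2.2.1, z.1, z.2.1, -(L.Ad z.2.2.2.1 z.2.2.2.2))

/-- The representation variety `X^{ℓ,1}_{YM}(G)`. -/
def X1set (L : LieExpAd G 𝔤) (ℓ : ℕ) : Set ((Fin ℓ → G × G) × G × 𝔤) :=
  {w | tupleStab L w.2.2 w.1 ∧ L.Ad w.2.1 w.2.2 = -w.2.2 ∧
    mm w.1 = L.exp w.2.2 * w.2.1 ^ 2}


private lemma Ad_mul_apply (L : LieExpAd G 𝔤) (a b : G) (X : 𝔤) :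
    L.Ad (a * b) X = L.Ad a (L.Ad b X) := by
  rw [map_mul]; rfl

private lemma Ad_inv_cancel (L : LieExpAd G 𝔤) (c : G) (X : 𝔤) :
    L.Ad c⁻¹ (L.Ad c X) = X := by
  rw [← Ad_mul_apply, inv_mul_cancel, map_one]; rfl

private lemma stab_smul (L : LieExpAd G 𝔤) {g : G} {X : 𝔤} (r : ℝ)
    (h : g ∈ stab L X) : g ∈ stab L (r • X) := by
  simp only [stab, Set.mem_setOf_eq] at h ⊢
  rw [map_smul, h]

private lemma Ad_inv_neg (L : LieExpAd G 𝔤) {c : G} {X : 𝔤}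
    (hc : L.Ad c X = -X) : L.Ad c⁻¹ X = -X := by
  have h := congrArg (L.Ad c⁻¹) hc
  rw [Ad_inv_cancel, map_neg] at h
  exact neg_eq_iff_eq_neg.mp h.symm

/-- `(V,c,X) ↦ (V,c,V,c,2X)` is a bijection from
`X^{ℓ,1}_{YM}(G)` onto the fixed-point set of `τ` in `Z^{ℓ,1}_{YM}(G)`. -/
theorem X1_bij_fixed [CompactSpace G] (L : LieExpAd G 𝔤) (ℓ : ℕ) :
    Set.BijOn
      (fun w : (Fin ℓ → G × G) × G × 𝔤 =>
        ((w.1, w.2.1, w.1, w.2.1, (2 : ℝ) • w.2.2) :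
          (Fin ℓ → G × G) × G × (Fin ℓ → G × G) × G × 𝔤))
      (X1set L ℓ) {z ∈ Z1set L ℓ | tau1 L z = z} := by
  refine ⟨?_, ?_, ?_⟩
  · rintro ⟨V, c, X⟩ ⟨hV, hc, hm⟩
    have hcinv : L.Ad c⁻¹ X = -X := Ad_inv_neg L hc
    have hhalf : (1/2 : ℝ) • ((2 : ℝ) • X) = X := by
      rw [smul_smul]; norm_num
    have hexp : L.exp (-X) = c⁻¹ * L.exp X * c := by
      rw [← hcinv, L.exp_Ad, inv_inv]
    refine ⟨⟨?_, ?_, ?_, ?_⟩, ?_⟩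
    · exact fun i => ⟨stab_smul L 2 (hV i).1, stab_smul L 2 (hV i).2⟩
    · intro i
      have key : ∀ v : G, v ∈ stab L X → c * v * c⁻¹ ∈ stab L ((2:ℝ) • X) := by
        intro v hv
        refine stab_smul L 2 ?_
        show L.Ad (c * v * c⁻¹) X = X
        rw [Ad_mul_apply, Ad_mul_apply, hcinv, map_neg, hv, map_neg, hc, neg_neg]
      exact ⟨key _ (hV i).1, key _ (hV i).2⟩
    · show mm V = L.exp ((1/2 : ℝ) • ((2:ℝ) • X)) * (c * c)
      rw [hhalf, hm, sq]
    · show mm V = c * L.exp (-((1/2 : ℝ) • ((2:ℝ) • X))) * c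
      rw [hhalf, hexp, hm, sq]
      group
    · have h5 : -(L.Ad c ((2:ℝ) • X)) = (2:ℝ) • X := by
        rw [map_smul, hc, smul_neg, neg_neg]
      simp [tau1, Prod.ext_iff, hc, smul_neg]
  · rintro ⟨V, c, X⟩ - ⟨V', c', X'⟩ - h
    simp only [Prod.mk.injEq] at h
    obtain ⟨h1, h2, -, -, h5⟩ := h
    have hX : X = X' := by
      have h' := congrArg (fun Y : 𝔤 => (1/2 : ℝ) • Y) h5
      simpa [smul_smul] using h'
    simp [h1, h2, hX]
  · rintro ⟨V, c, Vb, cb, X⟩ ⟨hz, hfix⟩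
    simp only [tau1, Prod.mk.injEq] at hfix
    obtain ⟨hVb, hcb, -, -, hfX⟩ := hfix
    subst hVb; subst hcb
    have hcX : L.Ad cb X = -X := neg_eq_iff_eq_neg.mp hfX
    obtain ⟨h1, h2, h3, h4⟩ := hz
    refine ⟨(Vb, cb, (1/2 : ℝ) • X), ⟨?_, ?_, ?_⟩, ?_⟩
    · exact fun i => ⟨stab_smul L _ (h1 i).1, stab_smul L _ (h1 i).2⟩
    · show L.Ad cb ((1/2 : ℝ) • X) = -((1/2 : ℝ) • X)
      rw [map_smul, hcX, smul_neg]
    · show mm Vb = L.exp ((1/2 : ℝ) • X) * cb ^ 2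
      rw [h3, sq]
    · have h5 : (2:ℝ) • ((1/2:ℝ) • X) = X := by rw [smul_smul]; norm_num
      simp [Prod.ext_iff, h5]
end
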